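/- Successive application of the one-level quasi-analytic wavelet packet analysis and synthesis to a real-valued signal x ∈ Π[N] produces twice the periodic analytic signals associated with x: with coefficients z₊^μ[l] = ⟨x, ψ_μ[·−2l]⟩ − i·⟨x, φ_μ[·−2l]⟩ and quasi-analytic wavelet packets Ψ₊_μ = ψ_μ + i·φ_μ, one has Σ_{μ=0}^{1} Σ_{l=0}^{N/2−1} z₊^μ[l]·Ψ₊_μ[k−2l] = 2·( x[k] + i·H(x)[k] ) for every k; and symmetrically, with z₋^μ[l] = conj(z₊^μ[l]) and Ψ₋_μ = ψ_μ − i·φ_μ, one has Σ_{μ,l} z₋^μ[l]·Ψ₋_μ[k−2l] = 2·( x[k] − i·H(x)[k] ). -/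

import Mathlib

open Finset

noncomputable def omegaN (N : ℕ) : ℂ := Complex.exp (2 * Real.pi * Complex.I / N)

noncomputable def U4r (N r : ℕ) (n : ℤ) : ℝ :=
  ((Real.cos (Real.pi * n / N)) ^ (4 * r) + (Real.sin (Real.pi * n / N)) ^ (4 * r)) / 2

noncomputable def betaF (N r : ℕ) (n : ℤ) : ℂ :=
  Complex.ofReal ((Real.cos (Real.pi * n / N)) ^ (2 * r) / Real.sqrt (U4r N r n))

noncomputable def alphaF (N r : ℕ) (n : ℤ) : ℂ :=
  omegaN N ^ n * Complex.ofReal ((Real.sin (Real.pi * n / N)) ^ (2 * r) / Real.sqrt (U4r N r n))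

noncomputable def psi0 (N r : ℕ) (k : ℤ) : ℂ :=
  (N : ℂ)⁻¹ * ∑ n ∈ Finset.range N, omegaN N ^ (k * (n : ℤ)) * betaF N r n

noncomputable def psi1 (N r : ℕ) (k : ℤ) : ℂ :=
  (N : ℂ)⁻¹ * ∑ n ∈ Finset.range N, omegaN N ^ (k * (n : ℤ)) * alphaF N r n

noncomputable def ip (N : ℕ) (x y : ℤ → ℂ) : ℂ :=
  ∑ k ∈ Finset.range N, x k * (starRingEnd ℂ) (y k)

/-- DFT of the first-level complementary wavelet packet φ₀. -/
noncomputable def phi0hat (N r : ℕ) (n : ℕ) : ℂ :=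
  if n = 0 then (Real.sqrt 2 : ℂ)
  else if 2 * n = N then 0
  else if 2 * n < N then -Complex.I * betaF N r n
  else Complex.I * betaF N r n

/-- DFT of the first-level complementary wavelet packet φ₁. -/
noncomputable def phi1hat (N r : ℕ) (n : ℕ) : ℂ :=
  if n = 0 then 0
  else if 2 * n = N then -(Real.sqrt 2 : ℂ)
  else if 2 * n < N then -Complex.I * alphaF N r n
  else Complex.I * alphaF N r n

/-- The first-level complementary wavelet packets φ₀, φ₁, via the inverse DFT. -/
noncomputable def phiW (N r : ℕ) (μ : Fin 2) (k : ℤ) : ℂ :=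
  (N : ℂ)⁻¹ * ∑ n ∈ Finset.range N,
    omegaN N ^ (k * (n : ℤ)) * (if μ.val = 0 then phi0hat N r n else phi1hat N r n)

noncomputable def psiW (N r : ℕ) (μ : Fin 2) (k : ℤ) : ℂ :=
  if μ.val = 0 then psi0 N r k else psi1 N r k

noncomputable def dft (N : ℕ) (x : ℤ → ℂ) (n : ℤ) : ℂ :=
  ∑ k ∈ Finset.range N, x k * omegaN N ^ (-((k : ℤ) * n))

/-- Discrete periodic Hilbert transform. -/
noncomputable def HT (N : ℕ) (x : ℤ → ℂ) (k : ℤ) : ℂ :=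
  (N : ℂ)⁻¹ * ∑ n ∈ Finset.range N,
    (if n = 0 ∨ 2 * n = N then 0 else if 2 * n < N then -Complex.I else Complex.I) *
      dft N x n * omegaN N ^ (k * (n : ℤ))

open Complex in
lemma om_prim (N : ℕ) (h : N ≠ 0) : IsPrimitiveRoot (omegaN N) N :=
  Complex.isPrimitiveRoot_exp N h

lemma om_ne (N : ℕ) : omegaN N ≠ 0 := Complex.exp_ne_zero _

lemma om_powN (N : ℕ) (h : N ≠ 0) : omegaN N ^ (N:ℤ) = 1 := by
  rw [zpow_natCast]; exact (om_prim N h).pow_eq_one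

lemma om_congr (N : ℕ) (h : N ≠ 0) {a b : ℤ} (hd : (N:ℤ) ∣ (a - b)) :
    omegaN N ^ a = omegaN N ^ b := by
  obtain ⟨t, ht⟩ := hd
  have ha : a = b + (N:ℤ) * t := by linarith
  rw [ha, zpow_add₀ (om_ne N), zpow_mul, om_powN N h, one_zpow, mul_one]

lemma conj_om_zpow (N : ℕ) (a : ℤ) : (starRingEnd ℂ) (omegaN N ^ a) = omegaN N ^ (-a) := by
  have h : (starRingEnd ℂ) (omegaN N) = (omegaN N)⁻¹ := by
    rw [omegaN, ← Complex.exp_conj, ← Complex.exp_neg]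
    congr 1
    simp [map_div₀, map_ofNat]
    ring
  rw [map_zpow₀, h, zpow_neg, inv_zpow]

lemma geom_prim (M : ℕ) (hM : M ≠ 0) (d : ℤ) :
    ∑ l ∈ Finset.range M, (omegaN M) ^ (d * l) = if (M:ℤ) ∣ d then (M:ℂ) else 0 := by
  by_cases h : (M:ℤ) ∣ d
  · rw [if_pos h]
    have : ∀ l ∈ Finset.range M, (omegaN M) ^ (d * (l:ℤ)) = 1 := by
      intro l _
      have : (omegaN M) ^ (d * (l:ℤ)) = (omegaN M) ^ (0:ℤ) := by
        apply om_congr M hM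
        simpa using Dvd.dvd.mul_right h (l:ℤ)
      simpa using this
    rw [Finset.sum_congr rfl this]
    simp
  · rw [if_neg h]
    set z := omegaN M ^ d with hz
    have hz1 : z ≠ 1 := by
      intro hcon
      exact h (((om_prim M hM).zpow_eq_one_iff_dvd d).mp hcon)
    have hterm : ∀ l : ℕ, (omegaN M) ^ (d * (l:ℤ)) = z ^ l := by
      intro l
      rw [hz, ← zpow_natCast (omegaN M ^ d) l, ← zpow_mul]
    calc ∑ l ∈ Finset.range M, (omegaN M) ^ (d * (l:ℤ)) = ∑ l ∈ Finset.range M, z ^ l := by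
          exact Finset.sum_congr rfl (fun l _ => hterm l)
      _ = (z ^ M - 1) / (z - 1) := geom_sum_eq hz1 M
      _ = 0 := by
          have : z ^ M = 1 := by
            rw [hz, ← zpow_natCast (omegaN M ^ d) M, ← zpow_mul]
            have : (omegaN M) ^ (d * (M:ℤ)) = (omegaN M) ^ (0:ℤ) := by
              apply om_congr M hM
              simp
            simpa using this
          rw [this]; simp

lemma om_sq (M : ℕ) (hM : M ≠ 0) : omegaN (2*M) ^ (2:ℤ) = omegaN M := by
  have hMC : (M:ℂ) ≠ 0 := Nat.cast_ne_zero.mpr hM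
  rw [omegaN, omegaN, ← Complex.exp_int_mul]
  congr 1
  push_cast
  field_simp

lemma om_half (M : ℕ) (hM : M ≠ 0) : omegaN (2*M) ^ (M:ℤ) = -1 := by
  have hMC : (M:ℂ) ≠ 0 := Nat.cast_ne_zero.mpr hM
  rw [omegaN, ← Complex.exp_int_mul, ← Complex.exp_pi_mul_I]
  congr 1
  push_cast
  field_simp

lemma geom_half (M : ℕ) (hM : M ≠ 0) (d : ℤ) :
    ∑ l ∈ Finset.range M, (omegaN (2*M)) ^ (2*(l:ℤ)*d) = if (M:ℤ) ∣ d then (M:ℂ) else 0 := by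
  rw [← geom_prim M hM d]
  apply Finset.sum_congr rfl
  intro l _
  rw [← om_sq M hM, ← zpow_mul]
  ring_nf

lemma per_ext (N : ℕ) (x : ℤ → ℂ) (hper : ∀ k : ℤ, x (k + N) = x k) (k t : ℤ) :
    x (k + N*t) = x k := by
  induction t using Int.induction_on with
  | zero => simp
  | succ n ih => rw [show k + (N:ℤ)*((n:ℤ)+1) = (k + N*n) + N by ring, hper, ih]
  | pred n ih =>
      have h := hper (k + N*(-(n:ℤ)-1))
      rw [show k + (N:ℤ)*(-(n:ℤ)-1) + N = k + N*(-(n:ℤ)) by ring] at h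
      rw [← h]
      exact ih

lemma dft_inv (N : ℕ) (hN0 : N ≠ 0) (x : ℤ → ℂ) (hper : ∀ k : ℤ, x (k + N) = x k) (k : ℤ) :
    ∑ n ∈ Finset.range N, omegaN N ^ (k*(n:ℤ)) * dft N x n = N * x k := by
  have step1 : ∀ n ∈ Finset.range N, omegaN N ^ (k*(n:ℤ)) * dft N x n
      = ∑ m ∈ Finset.range N, x m * omegaN N ^ ((k-(m:ℤ))*(n:ℤ)) := by
    intro n _
    rw [dft, Finset.mul_sum]
    apply Finset.sum_congr rfl
    intro m _
    rw [show (k-(m:ℤ))*(n:ℤ) = k*(n:ℤ) + -((m:ℤ)*(n:ℤ)) by ring, zpow_add₀ (om_ne N)]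
    ring
  rw [Finset.sum_congr rfl step1, Finset.sum_comm]
  have step2 : ∀ m ∈ Finset.range N, ∑ n ∈ Finset.range N, x m * omegaN N ^ ((k-(m:ℤ))*(n:ℤ))
      = x m * (if (N:ℤ) ∣ (k-(m:ℤ)) then (N:ℂ) else 0) := by
    intro m _
    rw [← Finset.mul_sum, geom_prim N hN0]
  rw [Finset.sum_congr rfl step2]
  set m0 : ℕ := (k % (N:ℤ)).toNat with hm0
  have hNpos : (0:ℤ) < N := by exact_mod_cast Nat.pos_of_ne_zero hN0
  have hmod : (0:ℤ) ≤ k % N := Int.emod_nonneg k (ne_of_gt hNpos)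
  have hmodlt : k % N < N := Int.emod_lt_of_pos k hNpos
  have hm0cast : (m0:ℤ) = k % N := Int.toNat_of_nonneg hmod
  have hm0mem : m0 ∈ Finset.range N := by
    rw [Finset.mem_range]
    exact_mod_cast hm0cast ▸ hmodlt
  have hdvd0 : (N:ℤ) ∣ (k - m0) := by
    rw [hm0cast]
    exact Int.dvd_self_sub_of_emod_eq rfl
  rw [Finset.sum_eq_single_of_mem m0 hm0mem]
  · rw [if_pos hdvd0]
    have hx : x m0 = x k := by
      obtain ⟨t, ht⟩ := hdvd0
      have : (m0:ℤ) + N * t = k := by linarith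
      rw [← this, per_ext N x hper]
    rw [hx]; ring
  · intro m hm hne
    rw [if_neg, mul_zero]
    intro hdvd
    have h2 : (N:ℤ) ∣ ((m:ℤ) - m0) := by
      have h3 := dvd_sub hdvd0 hdvd
      have he : (k - (m0:ℤ)) - (k - (m:ℤ)) = (m:ℤ) - m0 := by ring
      rwa [he] at h3
    have hmlt : (m:ℤ) < N := by exact_mod_cast Finset.mem_range.mp hm
    have hm0lt : (m0:ℤ) < N := by exact_mod_cast Finset.mem_range.mp hm0mem
    have hne' : (m:ℤ) - m0 ≠ 0 := by
      intro hc
      apply hne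
      have : (m:ℤ) = m0 := by linarith
      exact_mod_cast this
    have hle := Int.le_of_dvd (abs_pos.mpr hne') ((dvd_abs _ _).mpr h2)
    have hm0' : (0:ℤ) ≤ m0 := Int.ofNat_nonneg m0
    have hm' : (0:ℤ) ≤ m := Int.ofNat_nonneg m
    have : |(m:ℤ) - m0| < N := by
      rw [abs_lt]; constructor <;> linarith
    linarith

lemma refl_mem (N : ℕ) (h : N ≠ 0) (n : ℕ) : (N - n) % N < N :=
  Nat.mod_lt _ (Nat.pos_of_ne_zero h)

lemma refl_invol (N : ℕ) (h : N ≠ 0) (n : ℕ) (hn : n < N) : (N - (N - n) % N) % N = n := by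
  rcases Nat.eq_zero_or_pos n with h0 | h0
  · subst h0; simp [Nat.mod_self]
  · have h1 : (N - n) % N = N - n := Nat.mod_eq_of_lt (by omega)
    rw [h1, Nat.sub_sub_self (le_of_lt hn), Nat.mod_eq_of_lt hn]

lemma sum_reflect (N : ℕ) (h : N ≠ 0) (f g : ℕ → ℂ)
    (hfg : ∀ n, n < N → f ((N - n) % N) = g n) :
    ∑ n ∈ Finset.range N, f n = ∑ n ∈ Finset.range N, g n := by
  have h1 : ∑ n ∈ Finset.range N, f n = ∑ n ∈ Finset.range N, f ((N - n) % N) := by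
    apply Finset.sum_nbij' (i := fun n => (N - n) % N) (j := fun n => (N - n) % N)
    · intro a _; exact Finset.mem_range.mpr (refl_mem N h a)
    · intro a _; exact Finset.mem_range.mpr (refl_mem N h a)
    · intro a ha; exact refl_invol N h a (Finset.mem_range.mp ha)
    · intro a ha; exact refl_invol N h a (Finset.mem_range.mp ha)
    · intro a ha
      rw [refl_invol N h a (Finset.mem_range.mp ha)]
  rw [h1]
  exact Finset.sum_congr rfl (fun n hn => hfg n (Finset.mem_range.mp hn))

lemma refl_dvd (N : ℕ) (h : N ≠ 0) (n : ℕ) (hn : n < N) :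
    (N:ℤ) ∣ ((((N - n) % N : ℕ) : ℤ) + n) := by
  rcases Nat.eq_zero_or_pos n with h0 | h0
  · subst h0; simp [Nat.mod_self]
  · rw [Nat.mod_eq_of_lt (by omega)]
    have : ((N - n : ℕ) : ℤ) + n = N := by
      push_cast [Nat.cast_sub (le_of_lt hn)]; ring
    rw [this]

lemma om_refl_neg (N : ℕ) (h : N ≠ 0) (a : ℤ) (n : ℕ) (hn : n < N) :
    omegaN N ^ (-(a * (((N - n) % N : ℕ) : ℤ))) = omegaN N ^ (a * n) := by
  apply om_congr N h
  have : -(a * (((N - n) % N : ℕ) : ℤ)) - a * n = (-a) * ((((N - n) % N : ℕ) : ℤ) + n) := by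
    ring
  rw [this]
  exact Dvd.dvd.mul_left (refl_dvd N h n hn) (-a)
lemma beta_conj (N r : ℕ) (n : ℤ) : (starRingEnd ℂ) (betaF N r n) = betaF N r n :=
  Complex.conj_ofReal _

lemma ang_reflect (N : ℕ) (h : N ≠ 0) (n : ℕ) (hn : n ≤ N) :
    (Real.pi * (((N - n : ℕ) : ℤ) : ℝ) / N) = Real.pi - Real.pi * ((n : ℤ) : ℝ) / N := by
  have hN : (N:ℝ) ≠ 0 := Nat.cast_ne_zero.mpr h
  have hc : (((N - n : ℕ) : ℤ) : ℝ) = (N:ℝ) - n := by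
    push_cast [Nat.cast_sub hn]; ring
  rw [hc]
  field_simp
  push_cast
  ring

lemma U_reflect (N r : ℕ) (h : N ≠ 0) (n : ℕ) (hn : n ≤ N) :
    U4r N r ((N - n : ℕ) : ℤ) = U4r N r (n : ℤ) := by
  have he : Even (4*r) := ⟨2*r, by ring⟩
  rw [U4r, U4r, ang_reflect N h n hn, Real.cos_pi_sub, Real.sin_pi_sub, he.neg_pow]

lemma beta_reflect (N r : ℕ) (h : N ≠ 0) (n : ℕ) (hn : n ≤ N) :
    betaF N r ((N - n : ℕ) : ℤ) = betaF N r (n : ℤ) := by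
  have he : Even (2*r) := ⟨r, by ring⟩
  rw [betaF, betaF, U_reflect N r h n hn, ang_reflect N h n hn, Real.cos_pi_sub, he.neg_pow]

lemma alpha_zero (N r : ℕ) (hr : 1 ≤ r) : alphaF N r 0 = 0 := by
  rw [alphaF]
  have : Real.sin (Real.pi * ((0:ℤ):ℝ) / N) = 0 := by norm_num
  rw [this, zero_pow (by omega)]
  norm_num

lemma alpha_reflect (N r : ℕ) (h : N ≠ 0) (n : ℕ) (hn0 : 0 < n) (hn : n < N) :
    alphaF N r ((N - n : ℕ) : ℤ) = (starRingEnd ℂ) (alphaF N r (n : ℤ)) := by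
  rw [alphaF, alphaF, map_mul, conj_om_zpow, Complex.conj_ofReal]
  congr 1
  · apply om_congr N h
    have : ((N - n : ℕ) : ℤ) - (-(n:ℤ)) = N := by
      push_cast [Nat.cast_sub (le_of_lt hn)]; ring
    rw [this]
  · rw [U_reflect N r h n (le_of_lt hn), ang_reflect N h n (le_of_lt hn), Real.sin_pi_sub]

lemma beta_reflect' (N r : ℕ) (h : N ≠ 0) (n : ℕ) (hn : n < N) :
    betaF N r (((N - n) % N : ℕ) : ℤ) = betaF N r (n : ℤ) := by
  rcases Nat.eq_zero_or_pos n with h0 | h0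
  · subst h0; simp [Nat.mod_self]
  · rw [Nat.mod_eq_of_lt (by omega)]
    exact beta_reflect N r h n (le_of_lt hn)

lemma alpha_reflect' (N r : ℕ) (h : N ≠ 0) (hr : 1 ≤ r) (n : ℕ) (hn : n < N) :
    alphaF N r (((N - n) % N : ℕ) : ℤ) = (starRingEnd ℂ) (alphaF N r (n : ℤ)) := by
  rcases Nat.eq_zero_or_pos n with h0 | h0
  · subst h0
    simp [Nat.mod_self, alpha_zero N r hr]
  · rw [Nat.mod_eq_of_lt (by omega)]
    exact alpha_reflect N r h n h0 hn

lemma phi0hat_reflect (N r : ℕ) (h : N ≠ 0) (n : ℕ) (hn : n < N) :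
    phi0hat N r ((N - n) % N) = (starRingEnd ℂ) (phi0hat N r n) := by
  rcases Nat.eq_zero_or_pos n with h0 | h0
  · subst h0
    simp [phi0hat, Nat.mod_self, Complex.conj_ofReal]
  · have hm : (N - n) % N = N - n := Nat.mod_eq_of_lt (by omega)
    rw [hm]
    have hm0 : ¬ (N - n = 0) := by omega
    by_cases h2 : 2*n = N
    · have h2' : 2*(N - n) = N := by omega
      rw [phi0hat, phi0hat, if_neg hm0, if_pos h2', if_neg (by omega), if_pos h2]
      simp
    · by_cases h3 : 2*n < N
      · have h3' : ¬ (2*(N-n) = N) := by omega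
        have h4 : ¬ (2*(N-n) < N) := by omega
        rw [phi0hat, phi0hat, if_neg hm0, if_neg h3', if_neg h4,
          if_neg (by omega), if_neg h2, if_pos h3]
        rw [map_mul, Complex.conj_neg_I, beta_conj]
        congr 1
        exact_mod_cast beta_reflect N r h n (le_of_lt hn)
      · have h3' : 2*(N-n) < N := by omega
        rw [phi0hat, phi0hat, if_neg hm0, if_neg (by omega), if_pos h3',
          if_neg (by omega), if_neg h2, if_neg h3]
        rw [map_mul, Complex.conj_I, beta_conj]
        congr 1
        exact_mod_cast beta_reflect N r h n (le_of_lt hn)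

lemma phi1hat_reflect (N r : ℕ) (h : N ≠ 0) (hr : 1 ≤ r) (n : ℕ) (hn : n < N) :
    phi1hat N r ((N - n) % N) = (starRingEnd ℂ) (phi1hat N r n) := by
  rcases Nat.eq_zero_or_pos n with h0 | h0
  · subst h0
    simp [phi1hat, Nat.mod_self]
  · have hm : (N - n) % N = N - n := Nat.mod_eq_of_lt (by omega)
    rw [hm]
    have hm0 : ¬ (N - n = 0) := by omega
    by_cases h2 : 2*n = N
    · have h2' : 2*(N - n) = N := by omega
      rw [phi1hat, phi1hat, if_neg hm0, if_pos h2', if_neg (by omega), if_pos h2]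
      simp [Complex.conj_ofReal]
    · by_cases h3 : 2*n < N
      · have h3' : ¬ (2*(N-n) = N) := by omega
        have h4 : ¬ (2*(N-n) < N) := by omega
        rw [phi1hat, phi1hat, if_neg hm0, if_neg h3', if_neg h4,
          if_neg (by omega), if_neg h2, if_pos h3]
        rw [map_mul, Complex.conj_neg_I]
        congr 1
        exact_mod_cast alpha_reflect N r h n h0 hn
      · have h3' : 2*(N-n) < N := by omega
        rw [phi1hat, phi1hat, if_neg hm0, if_neg (by omega), if_pos h3',
          if_neg (by omega), if_neg h2, if_neg h3]
        rw [map_mul, Complex.conj_I]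
        congr 1
        exact_mod_cast alpha_reflect N r h n h0 hn

lemma hat_conj_sum (N : ℕ) (h : N ≠ 0) (k : ℤ) (c : ℕ → ℂ)
    (hc : ∀ n, n < N → c ((N - n) % N) = (starRingEnd ℂ) (c n)) :
    (starRingEnd ℂ) (∑ n ∈ Finset.range N, omegaN N ^ (k * (n:ℤ)) * c n)
      = ∑ n ∈ Finset.range N, omegaN N ^ (k * (n:ℤ)) * c n := by
  rw [map_sum]
  have step : ∀ n ∈ Finset.range N,
      (starRingEnd ℂ) (omegaN N ^ (k * (n:ℤ)) * c n)
        = omegaN N ^ (-(k * (n:ℤ))) * (starRingEnd ℂ) (c n) := by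
    intro n _
    rw [map_mul, conj_om_zpow]
  rw [Finset.sum_congr rfl step]
  apply sum_reflect N h
  intro n hn
  rw [om_refl_neg N h k n hn, hc n hn, Complex.conj_conj]

lemma conj_Ninv (N : ℕ) : (starRingEnd ℂ) ((N:ℂ)⁻¹) = (N:ℂ)⁻¹ := by
  rw [map_inv₀, map_natCast]

lemma psi0_real (N r : ℕ) (h : N ≠ 0) (k : ℤ) :
    (starRingEnd ℂ) (psi0 N r k) = psi0 N r k := by
  rw [psi0, map_mul, conj_Ninv]
  congr 1
  apply hat_conj_sum N h k (fun n => betaF N r n)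
  intro n hn
  rw [beta_reflect' N r h n hn]
  exact (beta_conj N r n).symm

lemma psi1_real (N r : ℕ) (h : N ≠ 0) (hr : 1 ≤ r) (k : ℤ) :
    (starRingEnd ℂ) (psi1 N r k) = psi1 N r k := by
  rw [psi1, map_mul, conj_Ninv]
  congr 1
  apply hat_conj_sum N h k (fun n => alphaF N r n)
  intro n hn
  exact alpha_reflect' N r h hr n hn

lemma psiW_real (N r : ℕ) (h : N ≠ 0) (hr : 1 ≤ r) (μ : Fin 2) (k : ℤ) :
    (starRingEnd ℂ) (psiW N r μ k) = psiW N r μ k := by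
  rw [psiW]
  by_cases hμ : μ.val = 0
  · rw [if_pos hμ]; exact psi0_real N r h k
  · rw [if_neg hμ]; exact psi1_real N r h hr k

lemma phiW_real (N r : ℕ) (h : N ≠ 0) (hr : 1 ≤ r) (μ : Fin 2) (k : ℤ) :
    (starRingEnd ℂ) (phiW N r μ k) = phiW N r μ k := by
  rw [phiW, map_mul, conj_Ninv]
  congr 1
  apply hat_conj_sum N h k (fun n => if μ.val = 0 then phi0hat N r n else phi1hat N r n)
  intro n hn
  by_cases hμ : μ.val = 0
  · simp only [if_pos hμ]
    exact phi0hat_reflect N r h n hn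
  · simp only [if_neg hμ]
    exact phi1hat_reflect N r h hr n hn

lemma dft_reflect (N : ℕ) (x : ℤ → ℂ) (h : N ≠ 0) (hreal : ∀ k : ℤ, (x k).im = 0)
    (n : ℕ) (hn : n < N) :
    dft N x (((N - n) % N : ℕ) : ℤ) = (starRingEnd ℂ) (dft N x (n:ℤ)) := by
  rw [dft, dft, map_sum]
  apply Finset.sum_congr rfl
  intro m _
  rw [map_mul, Complex.conj_eq_iff_im.mpr (hreal m), conj_om_zpow]
  congr 1
  rw [neg_neg]
  rw [show -((m:ℤ) * (((N - n) % N : ℕ) : ℤ)) = -((m:ℤ) * (((N - n) % N : ℕ) : ℤ)) from rfl]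
  exact om_refl_neg N h (m:ℤ) n hn

lemma cH_reflect (N : ℕ) (h : N ≠ 0) (n : ℕ) (hn : n < N) :
    (if (N - n) % N = 0 ∨ 2*((N - n) % N) = N then (0:ℂ)
      else if 2*((N - n) % N) < N then -Complex.I else Complex.I)
    = (starRingEnd ℂ) (if n = 0 ∨ 2*n = N then (0:ℂ)
      else if 2*n < N then -Complex.I else Complex.I) := by
  rcases Nat.eq_zero_or_pos n with h0 | h0
  · subst h0; simp [Nat.mod_self]
  · have hm : (N - n) % N = N - n := Nat.mod_eq_of_lt (by omega)
    rw [hm]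
    by_cases h2 : 2*n = N
    · rw [if_pos (Or.inr (by omega)), if_pos (Or.inr h2)]
      simp
    · by_cases h3 : 2*n < N
      · rw [if_neg (show ¬((N-n) = 0 ∨ 2*(N-n) = N) by omega),
          if_neg (show ¬(2*(N-n) < N) by omega),
          if_neg (show ¬(n = 0 ∨ 2*n = N) by omega), if_pos h3, Complex.conj_neg_I]
      · rw [if_neg (show ¬((N-n) = 0 ∨ 2*(N-n) = N) by omega),
          if_pos (show 2*(N-n) < N by omega),
          if_neg (show ¬(n = 0 ∨ 2*n = N) by omega), if_neg h3, Complex.conj_I]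

lemma HT_real (N : ℕ) (x : ℤ → ℂ) (h : N ≠ 0) (hreal : ∀ k : ℤ, (x k).im = 0) (k : ℤ) :
    (starRingEnd ℂ) (HT N x k) = HT N x k := by
  rw [HT, map_mul, conj_Ninv]
  congr 1
  have hswap : ∑ n ∈ Finset.range N,
      (if n = 0 ∨ 2 * n = N then (0:ℂ) else if 2 * n < N then -Complex.I else Complex.I) *
        dft N x n * omegaN N ^ (k * (n : ℤ))
      = ∑ n ∈ Finset.range N, omegaN N ^ (k * (n : ℤ)) *
        ((if n = 0 ∨ 2 * n = N then (0:ℂ) else if 2 * n < N then -Complex.I else Complex.I) *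
          dft N x n) := by
    apply Finset.sum_congr rfl
    intro n _
    ring
  rw [hswap]
  apply hat_conj_sum N h k
  intro n hn
  rw [map_mul, ← cH_reflect N h n hn, ← dft_reflect N x h hreal n hn]
lemma Upos (N r : ℕ) (n : ℤ) : 0 < U4r N r n := by
  rw [U4r]
  set c := Real.cos (Real.pi * n / N)
  set s := Real.sin (Real.pi * n / N)
  have hcs : s^2 + c^2 = 1 := Real.sin_sq_add_cos_sq _
  have h4 : ∀ x:ℝ, x^(4*r) = (x^2)^(2*r) := fun x => by rw [← pow_mul]; congr 1; ring
  rw [h4, h4]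
  rcases le_total ((1:ℝ)/2) (c^2) with h | h
  · have h1 : 0 < (c^2)^(2*r) := pow_pos (by linarith) _
    have h2 : 0 ≤ (s^2)^(2*r) := pow_nonneg (sq_nonneg s) _
    linarith
  · have h1 : 0 < (s^2)^(2*r) := pow_pos (by linarith) _
    have h2 : 0 ≤ (c^2)^(2*r) := pow_nonneg (sq_nonneg c) _
    linarith

lemma bapa (N r : ℕ) (n : ℤ) :
    betaF N r n * (starRingEnd ℂ) (betaF N r n)
      + alphaF N r n * (starRingEnd ℂ) (alphaF N r n) = 2 := by
  have hU := Upos N r n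
  have homega : omegaN N ^ n * omegaN N ^ (-n) = 1 := by
    rw [zpow_neg, mul_inv_cancel₀ (zpow_ne_zero _ (om_ne N))]
  rw [betaF, alphaF, Complex.conj_ofReal, map_mul, Complex.conj_ofReal, conj_om_zpow]
  have hre : omegaN N ^ n * ((Real.sin (Real.pi * n / N) ^ (2*r) / Real.sqrt (U4r N r n) : ℝ) : ℂ)
      * (omegaN N ^ (-n) * ((Real.sin (Real.pi * n / N) ^ (2*r) / Real.sqrt (U4r N r n) : ℝ) : ℂ))
      = (omegaN N ^ n * omegaN N ^ (-n)) *
        (((Real.sin (Real.pi * n / N) ^ (2*r) / Real.sqrt (U4r N r n) : ℝ) : ℂ)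
          * ((Real.sin (Real.pi * n / N) ^ (2*r) / Real.sqrt (U4r N r n) : ℝ) : ℂ)) := by
    ring
  rw [hre, homega, one_mul, ← Complex.ofReal_mul, ← Complex.ofReal_mul, ← Complex.ofReal_add]
  rw [show (2:ℂ) = ((2:ℝ):ℂ) by norm_num]
  rw [Complex.ofReal_inj]
  have hs : Real.sqrt (U4r N r n) * Real.sqrt (U4r N r n) = U4r N r n :=
    Real.mul_self_sqrt hU.le
  have hsne : Real.sqrt (U4r N r n) ≠ 0 := by positivity
  have hUne : U4r N r n ≠ 0 := ne_of_gt hU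
  field_simp
  rw [Real.sq_sqrt hU.le, U4r]
  ring

lemma ang_zero (N : ℕ) : (Real.pi * (((0:ℕ):ℤ):ℝ) / N) = 0 := by norm_num

lemma U_zero (N r : ℕ) (hr : 1 ≤ r) (hN : N ≠ 0) : U4r N r (0:ℤ) = 1/2 := by
  rw [U4r]
  norm_num [Real.cos_zero, Real.sin_zero, zero_pow (show 4*r ≠ 0 by omega)]

lemma beta_zero (N r : ℕ) (hr : 1 ≤ r) (hN : N ≠ 0) :
    betaF N r (0:ℤ) = ((Real.sqrt 2 : ℝ) : ℂ) := by
  rw [betaF, U_zero N r hr hN]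
  norm_num [Real.cos_zero]

lemma ang_half (M r : ℕ) (hM : M ≠ 0) :
    (Real.pi * (((M:ℕ):ℤ):ℝ) / ((2*M : ℕ):ℝ)) = Real.pi / 2 := by
  have hM' : (M:ℝ) ≠ 0 := Nat.cast_ne_zero.mpr hM
  push_cast
  field_simp

lemma U_half (M r : ℕ) (hr : 1 ≤ r) (hM : M ≠ 0) : U4r (2*M) r ((M:ℕ):ℤ) = 1/2 := by
  rw [U4r, ang_half M r hM]
  norm_num [Real.cos_pi_div_two, Real.sin_pi_div_two, zero_pow (show 4*r ≠ 0 by omega)]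

lemma beta_half (M r : ℕ) (hr : 1 ≤ r) (hM : M ≠ 0) : betaF (2*M) r ((M:ℕ):ℤ) = 0 := by
  rw [betaF, ang_half M r hM]
  norm_num [Real.cos_pi_div_two, zero_pow (show 2*r ≠ 0 by omega)]

lemma alpha_half (M r : ℕ) (hr : 1 ≤ r) (hM : M ≠ 0) :
    alphaF (2*M) r ((M:ℕ):ℤ) = -((Real.sqrt 2 : ℝ) : ℂ) := by
  rw [alphaF, ang_half M r hM, U_half M r hr hM, om_half M hM]
  norm_num [Real.sin_pi_div_two]

noncomputable def hpF (N r : ℕ) (μ : Fin 2) (n : ℕ) : ℂ :=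
  (if μ.val = 0 then betaF N r n else alphaF N r n) +
  Complex.I * (if μ.val = 0 then phi0hat N r n else phi1hat N r n)

def nbarF (N n : ℕ) : ℕ := if 2*n < N then n + N/2 else n - N/2

lemma hp_high (N r : ℕ) (μ : Fin 2) (n : ℕ) (h0 : n ≠ 0) (h2 : ¬ (2*n = N))
    (h3 : ¬ (2*n < N)) : hpF N r μ n = 0 := by
  rw [hpF]
  by_cases hμ : μ.val = 0
  · rw [if_pos hμ, if_pos hμ, phi0hat, if_neg h0, if_neg h2, if_neg h3]
    rw [← mul_assoc, Complex.I_mul_I]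
    ring
  · rw [if_neg hμ, if_neg hμ, phi1hat, if_neg h0, if_neg h2, if_neg h3]
    rw [← mul_assoc, Complex.I_mul_I]
    ring

lemma hp0_half (M r : ℕ) (hr : 1 ≤ r) (hM : M ≠ 0) : hpF (2*M) r 0 M = 0 := by
  rw [hpF]
  norm_num
  rw [phi0hat, if_neg hM, if_pos rfl, beta_half M r hr hM]
  simp

lemma hp1_zero (N r : ℕ) (hr : 1 ≤ r) : hpF N r 1 0 = 0 := by
  rw [hpF]
  norm_num
  rw [phi1hat, if_pos rfl, alpha_zero N r hr]
  simp

lemma hp0_low (N r : ℕ) (n : ℕ) (h0 : n ≠ 0) (h3 : 2*n < N) :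
    hpF N r 0 n = 2 * betaF N r n := by
  rw [hpF]
  norm_num
  rw [phi0hat, if_neg h0, if_neg (by omega), if_pos h3]
  linear_combination (-(betaF N r (n:ℤ))) * Complex.I_sq

lemma hp1_low (N r : ℕ) (n : ℕ) (h0 : n ≠ 0) (h3 : 2*n < N) :
    hpF N r 1 n = 2 * alphaF N r n := by
  rw [hpF]
  norm_num
  rw [phi1hat, if_neg h0, if_neg (by omega), if_pos h3]
  linear_combination (-(alphaF N r (n:ℤ))) * Complex.I_sq

lemma P2 (M r : ℕ) (hM : M ≠ 0) (hr : 1 ≤ r) (n : ℕ) (hn : n < 2*M) :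
    ∑ μ : Fin 2, hpF (2*M) r μ n * (starRingEnd ℂ) (hpF (2*M) r μ (nbarF (2*M) n)) = 0 := by
  rw [Fin.sum_univ_two]
  by_cases h0 : n = 0
  · subst h0
    rw [hp1_zero (2*M) r hr, nbarF, if_pos (by omega)]
    rw [show 0 + (2*M)/2 = M by omega, hp0_half M r hr hM]
    simp
  · by_cases h3 : 2*n < 2*M
    · rw [nbarF, if_pos h3, show n + (2*M)/2 = n + M by omega]
      rw [hp_high (2*M) r 0 (n+M) (by omega) (by omega) (by omega)]
      rw [hp_high (2*M) r 1 (n+M) (by omega) (by omega) (by omega)]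
      simp
    · by_cases h2 : 2*n = 2*M
      · have hnM : n = M := by omega
        rw [nbarF, if_neg (by omega), show n - (2*M)/2 = 0 by omega, hnM,
          hp0_half M r hr hM, hp1_zero (2*M) r hr]
        simp
      · rw [hp_high (2*M) r 0 n h0 h2 h3, hp_high (2*M) r 1 n h0 h2 h3]
        simp

lemma P1 (M r : ℕ) (hM : M ≠ 0) (hr : 1 ≤ r) (n : ℕ) (hn : n < 2*M) :
    ∑ μ : Fin 2, hpF (2*M) r μ n * (starRingEnd ℂ) (hpF (2*M) r μ n)
    = 4 * (1 + Complex.I *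
        (if n = 0 ∨ 2*n = 2*M then 0 else if 2*n < 2*M then -Complex.I else Complex.I)) := by
  have hN0 : (2*M) ≠ 0 := by omega
  rw [Fin.sum_univ_two]
  have hs : ((Real.sqrt 2 : ℝ) : ℂ) * ((Real.sqrt 2 : ℝ) : ℂ) = 2 := by
    rw [← Complex.ofReal_mul, Real.mul_self_sqrt (by norm_num)]
    norm_num
  by_cases h0 : n = 0
  · subst h0
    rw [if_pos (Or.inl rfl), hp1_zero (2*M) r hr]
    rw [hpF]
    norm_num
    rw [phi0hat, if_pos rfl, beta_zero (2*M) r hr hN0]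
    simp only [Complex.conj_ofReal]
    linear_combination (1 - Complex.I^2) * hs - 2 * Complex.I_sq
  · by_cases h2 : 2*n = 2*M
    · have hnM : n = M := by omega
      rw [if_pos (Or.inr h2), hnM, hp0_half M r hr hM]
      rw [hpF]
      norm_num
      rw [phi1hat, if_neg hM, if_pos rfl, alpha_half M r hr hM]
      simp only [map_neg, Complex.conj_ofReal]
      linear_combination (1 - Complex.I^2) * hs - 2 * Complex.I_sq
    · by_cases h3 : 2*n < 2*M
      · rw [if_neg (by push_neg; exact ⟨h0, h2⟩), if_pos h3]
        rw [hp0_low (2*M) r n h0 h3, hp1_low (2*M) r n h0 h3]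
        rw [map_mul, map_mul]
        simp only [map_ofNat]
        have hb := bapa (2*M) r (n:ℤ)
        linear_combination (4:ℂ) * hb + 4 * Complex.I_sq
      · rw [if_neg (by push_neg; exact ⟨h0, h2⟩), if_neg h3]
        rw [hp_high (2*M) r 0 n h0 h2 h3, hp_high (2*M) r 1 n h0 h2 h3]
        rw [Complex.I_mul_I]
        simp

noncomputable def WpF (N r : ℕ) (μ : Fin 2) (t : ℤ) : ℂ :=
  (N:ℂ)⁻¹ * ∑ n ∈ Finset.range N, omegaN N ^ (t * (n:ℤ)) * hpF N r μ n

lemma L_plus (N r : ℕ) (μ : Fin 2) (t : ℤ) :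
    psiW N r μ t + Complex.I * phiW N r μ t = WpF N r μ t := by
  rw [WpF, psiW, phiW]
  have hsum : ∑ n ∈ Finset.range N, omegaN N ^ (t*(n:ℤ)) * hpF N r μ n
      = (∑ n ∈ Finset.range N, omegaN N ^ (t*(n:ℤ)) *
          (if μ.val = 0 then betaF N r n else alphaF N r n))
        + Complex.I * ∑ n ∈ Finset.range N, omegaN N ^ (t*(n:ℤ)) *
          (if μ.val = 0 then phi0hat N r n else phi1hat N r n) := by
    rw [Finset.mul_sum, ← Finset.sum_add_distrib]
    apply Finset.sum_congr rfl
    intro n _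
    rw [hpF]
    ring
  rw [hsum, mul_add]
  by_cases hμ : μ.val = 0
  · simp only [if_pos hμ]
    rw [psi0]
    ring
  · simp only [if_neg hμ]
    rw [psi1]
    ring

lemma L_z (N r : ℕ) (x : ℤ → ℂ) (μ : Fin 2) (s : ℤ) :
    ip N x (fun t => psiW N r μ (t - s)) - Complex.I * ip N x (fun t => phiW N r μ (t - s))
      = ∑ m ∈ Finset.range N, x m * (starRingEnd ℂ) (WpF N r μ ((m:ℤ) - s)) := by
  rw [ip, ip, Finset.mul_sum, ← Finset.sum_sub_distrib]
  apply Finset.sum_congr rfl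
  intro m _
  rw [← L_plus, map_add, map_mul, Complex.conj_I]
  ring

lemma conj_WpF (N r : ℕ) (μ : Fin 2) (t : ℤ) :
    (starRingEnd ℂ) (WpF N r μ t)
      = (N:ℂ)⁻¹ * ∑ n ∈ Finset.range N, omegaN N ^ (-(t*(n:ℤ))) * (starRingEnd ℂ) (hpF N r μ n) := by
  rw [WpF, map_mul, conj_Ninv, map_sum]
  congr 1
  apply Finset.sum_congr rfl
  intro n _
  rw [map_mul, conj_om_zpow]

lemma core1 (N r : ℕ) (x : ℤ → ℂ) (μ : Fin 2) (l : ℤ) :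
    ∑ m ∈ Finset.range N, x m * (starRingEnd ℂ) (WpF N r μ ((m:ℤ) - 2*l))
      = (N:ℂ)⁻¹ * ∑ n ∈ Finset.range N,
          omegaN N ^ (2*l*(n:ℤ)) * (starRingEnd ℂ) (hpF N r μ n) * dft N x n := by
  have step : ∀ m ∈ Finset.range N, x m * (starRingEnd ℂ) (WpF N r μ ((m:ℤ) - 2*l))
      = (N:ℂ)⁻¹ * ∑ n ∈ Finset.range N,
          omegaN N ^ (2*l*(n:ℤ)) * (starRingEnd ℂ) (hpF N r μ n)
            * (x m * omegaN N ^ (-((m:ℤ)*(n:ℤ)))) := by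
    intro m _
    rw [conj_WpF, mul_left_comm, Finset.mul_sum]
    congr 1
    apply Finset.sum_congr rfl
    intro n _
    rw [show -(((m:ℤ) - 2*l)*(n:ℤ)) = 2*l*(n:ℤ) + -((m:ℤ)*(n:ℤ)) by ring,
      zpow_add₀ (om_ne N)]
    ring
  rw [Finset.sum_congr rfl step, ← Finset.mul_sum]
  congr 1
  rw [Finset.sum_comm]
  apply Finset.sum_congr rfl
  intro n _
  rw [dft, Finset.mul_sum]

lemma collapse (M : ℕ) (hM : M ≠ 0) (g : ℕ → ℂ) (n : ℕ) (hn : n < 2*M) :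
    ∑ n' ∈ Finset.range (2*M), (if (M:ℤ) ∣ ((n':ℤ) - (n:ℤ)) then (M:ℂ) else 0) * g n'
      = (M:ℂ) * (g n + g (nbarF (2*M) n)) := by
  have hnbar1 : nbarF (2*M) n < 2*M := by rw [nbarF]; split <;> omega
  have hnbar2 : nbarF (2*M) n ≠ n := by rw [nbarF]; split <;> omega
  have hMpos : (0:ℤ) < (M:ℤ) := by exact_mod_cast Nat.pos_of_ne_zero hM
  have hiff : ∀ n' ∈ Finset.range (2*M),
      ((M:ℤ) ∣ ((n':ℤ) - (n:ℤ))) ↔ (n' = n ∨ n' = nbarF (2*M) n) := by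
    intro n' hn'
    have hn'2 : n' < 2*M := Finset.mem_range.mp hn'
    constructor
    · rintro ⟨t, ht⟩
      have hb1 : ((n':ℤ) - n) < 2*M := by
        have : ((n':ℤ)) < 2*M := by exact_mod_cast hn'2
        have : (0:ℤ) ≤ n := Int.ofNat_nonneg n
        omega
      have hb2 : -(2*(M:ℤ)) < ((n':ℤ) - n) := by
        have : ((n:ℤ)) < 2*M := by exact_mod_cast hn
        have : (0:ℤ) ≤ n' := Int.ofNat_nonneg n'
        omega
      have ht1 : t < 2 := by
        by_contra hc
        push_neg at hc
        nlinarith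
      have ht2 : -2 < t := by
        by_contra hc
        push_neg at hc
        nlinarith
      interval_cases t
      · right
        rw [nbarF]
        rw [show (M:ℤ) * (-1) = -(M:ℤ) by ring] at ht
        split <;> omega
      · left
        omega
      · right
        rw [nbarF]
        rw [show (M:ℤ) * 1 = (M:ℤ) by ring] at ht
        split <;> omega
    · rintro (h1 | h1) <;> subst h1
      · simp
      · rw [nbarF]
        split
        · exact ⟨1, by omega⟩
        · exact ⟨-1, by omega⟩
  have hsplit : ∀ n' ∈ Finset.range (2*M),
      (if (M:ℤ) ∣ ((n':ℤ) - (n:ℤ)) then (M:ℂ) else 0) * g n'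
        = (if n' = n then (M:ℂ) * g n' else 0)
          + (if n' = nbarF (2*M) n then (M:ℂ) * g n' else 0) := by
    intro n' hn'
    by_cases h : (M:ℤ) ∣ ((n':ℤ) - (n:ℤ))
    · rw [if_pos h]
      rcases (hiff n' hn').mp h with h1 | h1
      · subst h1
        rw [if_pos rfl, if_neg (fun hc => hnbar2 hc.symm), add_zero]
      · subst h1
        rw [if_neg hnbar2, if_pos rfl, zero_add]
    · rw [if_neg h, if_neg (fun h1 => h ((hiff n' hn').mpr (Or.inl h1))),
        if_neg (fun h1 => h ((hiff n' hn').mpr (Or.inr h1))), zero_mul, add_zero]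
  rw [Finset.sum_congr rfl hsplit, Finset.sum_add_distrib,
    Finset.sum_ite_eq' (Finset.range (2*M)) n (fun n' => (M:ℂ) * g n'),
    Finset.sum_ite_eq' (Finset.range (2*M)) (nbarF (2*M) n) (fun n' => (M:ℂ) * g n'),
    if_pos (Finset.mem_range.mpr hn), if_pos (Finset.mem_range.mpr hnbar1)]
  ring

lemma core2 (M r : ℕ) (hM : M ≠ 0) (x : ℤ → ℂ) (μ : Fin 2) (k : ℤ) :
    ∑ l ∈ Finset.range M,
      (∑ m ∈ Finset.range (2*M), x m * (starRingEnd ℂ) (WpF (2*M) r μ ((m:ℤ) - 2*(l:ℤ)))) *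
        WpF (2*M) r μ (k - 2*(l:ℤ))
    = (((2*M:ℕ)):ℂ)⁻¹ * (((2*M:ℕ)):ℂ)⁻¹ * (M:ℂ) *
        ∑ n ∈ Finset.range (2*M), omegaN (2*M) ^ (k*(n:ℤ)) * hpF (2*M) r μ n *
          ((starRingEnd ℂ) (hpF (2*M) r μ n) * dft (2*M) x n
            + (starRingEnd ℂ) (hpF (2*M) r μ (nbarF (2*M) n)) * dft (2*M) x ((nbarF (2*M) n))) := by
  have hstep1 : ∀ l ∈ Finset.range M,
      (∑ m ∈ Finset.range (2*M), x m * (starRingEnd ℂ) (WpF (2*M) r μ ((m:ℤ) - 2*(l:ℤ)))) *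
        WpF (2*M) r μ (k - 2*(l:ℤ))
      = (((2*M:ℕ)):ℂ)⁻¹ * (((2*M:ℕ)):ℂ)⁻¹ *
          ∑ n ∈ Finset.range (2*M), ∑ n' ∈ Finset.range (2*M),
            (omegaN (2*M) ^ (k*(n:ℤ)) * hpF (2*M) r μ n *
              ((starRingEnd ℂ) (hpF (2*M) r μ n') * dft (2*M) x n'))
              * omegaN (2*M) ^ (2*(l:ℤ)*((n':ℤ) - (n:ℤ))) := by
    intro l _
    rw [core1, WpF]
    rw [show ((((2*M:ℕ)):ℂ)⁻¹ * ∑ n' ∈ Finset.range (2*M),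
          omegaN (2*M) ^ (2*(l:ℤ)*(n':ℤ)) * (starRingEnd ℂ) (hpF (2*M) r μ n') * dft (2*M) x n')
        * ((((2*M:ℕ)):ℂ)⁻¹ * ∑ n ∈ Finset.range (2*M),
          omegaN (2*M) ^ ((k - 2*(l:ℤ))*(n:ℤ)) * hpF (2*M) r μ n)
      = (((2*M:ℕ)):ℂ)⁻¹ * (((2*M:ℕ)):ℂ)⁻¹ *
        ((∑ n ∈ Finset.range (2*M),
          omegaN (2*M) ^ ((k - 2*(l:ℤ))*(n:ℤ)) * hpF (2*M) r μ n) *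
         (∑ n' ∈ Finset.range (2*M),
          omegaN (2*M) ^ (2*(l:ℤ)*(n':ℤ)) * (starRingEnd ℂ) (hpF (2*M) r μ n') * dft (2*M) x n'))
      by ring]
    congr 1
    rw [Finset.sum_mul]
    apply Finset.sum_congr rfl
    intro n _
    rw [Finset.mul_sum]
    apply Finset.sum_congr rfl
    intro n' _
    rw [show (k - 2*(l:ℤ))*(n:ℤ) = k*(n:ℤ) + -(2*(l:ℤ)*(n:ℤ)) by ring, zpow_add₀ (om_ne _),
      show 2*(l:ℤ)*((n':ℤ) - (n:ℤ)) = 2*(l:ℤ)*(n':ℤ) + -(2*(l:ℤ)*(n:ℤ)) by ring,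
      zpow_add₀ (om_ne _)]
    ring
  rw [Finset.sum_congr rfl hstep1, ← Finset.mul_sum, Finset.sum_comm]
  have hfin : ∀ n ∈ Finset.range (2*M),
      ∑ l ∈ Finset.range M, ∑ n' ∈ Finset.range (2*M),
        (omegaN (2*M) ^ (k*(n:ℤ)) * hpF (2*M) r μ n *
          ((starRingEnd ℂ) (hpF (2*M) r μ n') * dft (2*M) x n'))
          * omegaN (2*M) ^ (2*(l:ℤ)*((n':ℤ) - (n:ℤ)))
      = (M:ℂ) * (omegaN (2*M) ^ (k*(n:ℤ)) * hpF (2*M) r μ n *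
          ((starRingEnd ℂ) (hpF (2*M) r μ n) * dft (2*M) x n
            + (starRingEnd ℂ) (hpF (2*M) r μ (nbarF (2*M) n)) *
                dft (2*M) x ((nbarF (2*M) n)))) := by
    intro n hn
    have hswap : ∑ l ∈ Finset.range M, ∑ n' ∈ Finset.range (2*M),
        (omegaN (2*M) ^ (k*(n:ℤ)) * hpF (2*M) r μ n *
          ((starRingEnd ℂ) (hpF (2*M) r μ n') * dft (2*M) x n'))
          * omegaN (2*M) ^ (2*(l:ℤ)*((n':ℤ) - (n:ℤ)))
        = ∑ n' ∈ Finset.range (2*M),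
            (if (M:ℤ) ∣ ((n':ℤ) - (n:ℤ)) then (M:ℂ) else 0) *
              (omegaN (2*M) ^ (k*(n:ℤ)) * hpF (2*M) r μ n *
                ((starRingEnd ℂ) (hpF (2*M) r μ n') * dft (2*M) x n')) := by
      rw [Finset.sum_comm]
      apply Finset.sum_congr rfl
      intro n' _
      rw [← Finset.mul_sum, geom_half M hM ((n':ℤ) - (n:ℤ))]
      ring
    rw [hswap, collapse M hM
      (fun n' => omegaN (2*M) ^ (k*(n:ℤ)) * hpF (2*M) r μ n *
        ((starRingEnd ℂ) (hpF (2*M) r μ n') * dft (2*M) x n')) n (Finset.mem_range.mp hn)]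
    ring
  rw [Finset.sum_congr rfl hfin, ← Finset.mul_sum]
  ring

/-- One-level quasi-analytic analysis followed by synthesis produces twice
the periodic analytic signals: Σ_{μ,l} z₊^μ[l]·Ψ₊_μ[k−2l] = 2(x[k] + i·H(x)[k]) with
z₊^μ[l] = ⟨x,ψ_μ[·−2l]⟩ − i⟨x,φ_μ[·−2l]⟩ and Ψ₊_μ = ψ_μ + iφ_μ; symmetrically with
z₋^μ[l] = conj(z₊^μ[l]) and Ψ₋_μ = ψ_μ − iφ_μ one gets 2(x[k] − i·H(x)[k]). -/
theorem stmt_13 (j r : ℕ) (hj : 3 ≤ j) (hr : 1 ≤ r) (N : ℕ) (hN : N = 2 ^ j)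
    (x : ℤ → ℂ) (hper : ∀ k : ℤ, x (k + N) = x k) (hreal : ∀ k : ℤ, (x k).im = 0) :
    ∀ k : ℤ,
      (∑ μ : Fin 2, ∑ l ∈ Finset.range (N / 2),
        (ip N x (fun t => psiW N r μ (t - 2 * (l : ℤ))) -
            Complex.I * ip N x (fun t => phiW N r μ (t - 2 * (l : ℤ)))) *
          (psiW N r μ (k - 2 * (l : ℤ)) + Complex.I * phiW N r μ (k - 2 * (l : ℤ)))) =
        2 * (x k + Complex.I * HT N x k) ∧
      (∑ μ : Fin 2, ∑ l ∈ Finset.range (N / 2),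
        (starRingEnd ℂ) (ip N x (fun t => psiW N r μ (t - 2 * (l : ℤ))) -
            Complex.I * ip N x (fun t => phiW N r μ (t - 2 * (l : ℤ)))) *
          (psiW N r μ (k - 2 * (l : ℤ)) - Complex.I * phiW N r μ (k - 2 * (l : ℤ)))) =
        2 * (x k - Complex.I * HT N x k) := by
  intro k
  have h8 : 8 ≤ N := by
    rw [hN]
    calc (8:ℕ) = 2^3 := by norm_num
      _ ≤ 2^j := Nat.pow_le_pow_right (by norm_num) hj
  have hdvd : 2 ∣ N := hN ▸ dvd_pow_self 2 (by omega)
  obtain ⟨M, hNM⟩ : ∃ M, N = 2*M := ⟨N/2, by omega⟩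
  subst hNM
  have hM0 : M ≠ 0 := by omega
  have hN0 : 2*M ≠ 0 := by omega
  have hMC0 : (M:ℂ) ≠ 0 := Nat.cast_ne_zero.mpr hM0
  have hNC0 : ((2*M:ℕ):ℂ) ≠ 0 := Nat.cast_ne_zero.mpr hN0
  have h22 : (2*M)/2 = M := by omega
  -- the first identity
  have hfirst : (∑ μ : Fin 2, ∑ l ∈ Finset.range ((2*M) / 2),
      (ip (2*M) x (fun t => psiW (2*M) r μ (t - 2 * (l : ℤ))) -
          Complex.I * ip (2*M) x (fun t => phiW (2*M) r μ (t - 2 * (l : ℤ)))) *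
        (psiW (2*M) r μ (k - 2 * (l : ℤ)) + Complex.I * phiW (2*M) r μ (k - 2 * (l : ℤ)))) =
      2 * (x k + Complex.I * HT (2*M) x k) := by
    rw [h22]
    have hmu : ∀ μ : Fin 2, ∑ l ∈ Finset.range M,
        (ip (2*M) x (fun t => psiW (2*M) r μ (t - 2 * (l : ℤ))) -
            Complex.I * ip (2*M) x (fun t => phiW (2*M) r μ (t - 2 * (l : ℤ)))) *
          (psiW (2*M) r μ (k - 2 * (l : ℤ)) + Complex.I * phiW (2*M) r μ (k - 2 * (l : ℤ)))
        = (((2*M:ℕ)):ℂ)⁻¹ * (((2*M:ℕ)):ℂ)⁻¹ * (M:ℂ) *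
            ∑ n ∈ Finset.range (2*M), omegaN (2*M) ^ (k*(n:ℤ)) * hpF (2*M) r μ n *
              ((starRingEnd ℂ) (hpF (2*M) r μ n) * dft (2*M) x n
                + (starRingEnd ℂ) (hpF (2*M) r μ (nbarF (2*M) n)) *
                    dft (2*M) x ((nbarF (2*M) n))) := by
      intro μ
      rw [← core2 M r hM0 x μ k]
      apply Finset.sum_congr rfl
      intro l _
      rw [L_z, L_plus]
    rw [Finset.sum_congr rfl (fun μ _ => hmu μ), ← Finset.mul_sum, Finset.sum_comm]
    have hptwise : ∀ n ∈ Finset.range (2*M),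
        ∑ μ : Fin 2, omegaN (2*M) ^ (k*(n:ℤ)) * hpF (2*M) r μ n *
          ((starRingEnd ℂ) (hpF (2*M) r μ n) * dft (2*M) x n
            + (starRingEnd ℂ) (hpF (2*M) r μ (nbarF (2*M) n)) *
                dft (2*M) x ((nbarF (2*M) n)))
        = 4 * (omegaN (2*M) ^ (k*(n:ℤ)) * dft (2*M) x n)
          + 4 * (Complex.I *
              ((if n = 0 ∨ 2*n = 2*M then (0:ℂ) else if 2*n < 2*M then -Complex.I else Complex.I)
                * dft (2*M) x n * omegaN (2*M) ^ (k*(n:ℤ)))) := by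
      intro n hn
      have hn' : n < 2*M := Finset.mem_range.mp hn
      have hgroup : ∑ μ : Fin 2, omegaN (2*M) ^ (k*(n:ℤ)) * hpF (2*M) r μ n *
          ((starRingEnd ℂ) (hpF (2*M) r μ n) * dft (2*M) x n
            + (starRingEnd ℂ) (hpF (2*M) r μ (nbarF (2*M) n)) *
                dft (2*M) x ((nbarF (2*M) n)))
          = omegaN (2*M) ^ (k*(n:ℤ)) *
            ((∑ μ : Fin 2, hpF (2*M) r μ n * (starRingEnd ℂ) (hpF (2*M) r μ n)) *
                dft (2*M) x n
              + (∑ μ : Fin 2, hpF (2*M) r μ n *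
                  (starRingEnd ℂ) (hpF (2*M) r μ (nbarF (2*M) n))) *
                dft (2*M) x ((nbarF (2*M) n))) := by
        rw [Fin.sum_univ_two, Fin.sum_univ_two, Fin.sum_univ_two]
        ring
      rw [hgroup, P1 M r hM0 hr n hn', P2 M r hM0 hr n hn']
      ring
    rw [Finset.sum_congr rfl hptwise, Finset.sum_add_distrib, ← Finset.mul_sum, ← Finset.mul_sum]
    have hinv : ∑ n ∈ Finset.range (2*M), omegaN (2*M) ^ (k*(n:ℤ)) * dft (2*M) x n
        = ((2*M:ℕ):ℂ) * x k := dft_inv (2*M) hN0 x hper k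
    have hIH : ∑ n ∈ Finset.range (2*M), Complex.I *
        ((if n = 0 ∨ 2*n = 2*M then (0:ℂ) else if 2*n < 2*M then -Complex.I else Complex.I)
          * dft (2*M) x n * omegaN (2*M) ^ (k*(n:ℤ)))
        = Complex.I * (((2*M:ℕ):ℂ) * HT (2*M) x k) := by
      rw [← Finset.mul_sum]
      congr 1
      rw [HT, ← mul_assoc, mul_inv_cancel₀ hNC0, one_mul]
    rw [hinv, hIH]
    have hcast : ((2*M:ℕ):ℂ) = 2*(M:ℂ) := by push_cast; ring
    rw [hcast]
    field_simp
    ring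
  constructor
  · exact hfirst
  · have hconj : (∑ μ : Fin 2, ∑ l ∈ Finset.range ((2*M) / 2),
        (starRingEnd ℂ) (ip (2*M) x (fun t => psiW (2*M) r μ (t - 2 * (l : ℤ))) -
            Complex.I * ip (2*M) x (fun t => phiW (2*M) r μ (t - 2 * (l : ℤ)))) *
          (psiW (2*M) r μ (k - 2 * (l : ℤ)) - Complex.I * phiW (2*M) r μ (k - 2 * (l : ℤ))))
        = (starRingEnd ℂ) (∑ μ : Fin 2, ∑ l ∈ Finset.range ((2*M) / 2),
        (ip (2*M) x (fun t => psiW (2*M) r μ (t - 2 * (l : ℤ))) -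
            Complex.I * ip (2*M) x (fun t => phiW (2*M) r μ (t - 2 * (l : ℤ)))) *
          (psiW (2*M) r μ (k - 2 * (l : ℤ)) + Complex.I * phiW (2*M) r μ (k - 2 * (l : ℤ)))) := by
      rw [map_sum]
      apply Finset.sum_congr rfl
      intro μ _
      rw [map_sum]
      apply Finset.sum_congr rfl
      intro l _
      rw [map_mul, map_add, map_mul, Complex.conj_I,
        psiW_real (2*M) r hN0 hr, phiW_real (2*M) r hN0 hr]
      ring
    rw [hconj, hfirst, map_mul, map_add, map_mul, Complex.conj_I,
      HT_real (2*M) x hN0 hreal k, Complex.conj_eq_iff_im.mpr (hreal k), map_ofNat]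
    ring
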